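/- arXiv:2206.14896 — 2 statements merged into one kernel-verified Lean document; each statement's English description precedes it below -/
import Mathlib

section
/- Let α ∈ ℝ_{≥0}^d with α_1 ≥ ... ≥ α_d ≥ 0, and let r be the smallest index such that Σ_{i=1}^r α_i² ≥ (1/3)‖α‖_2². Suppose Σ_{i=1}^r α_i² ≤ (2/3)‖α‖_2² (so both α⁺ = (α_1,...,α_r) and α⁻ = (α_{r+1},...,α_d) carry at least a third of the ℓ² mass). Then (‖α⁻‖_2/‖α⁻‖_4)⁴ ≥ (1/9)·(‖α‖_2/‖α‖_3)⁶. -/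
set_option maxHeartbeats 1000000


/-- If `α` is nonnegative and decreasing, and `r` is the smallest index such that
the first `r` squared coordinates carry at least a third of the squared ℓ² mass,
and they carry at most two thirds of it, then
`(‖α⁻‖₂/‖α⁻‖₄)⁴ ≥ (1/9) (‖α‖₂/‖α‖₃)⁶`, written here without roots as
`‖α⁻‖₂⁴/‖α⁻‖₄⁴ ≥ (1/9) ‖α‖₂⁶/‖α‖₃⁶`. -/
theorem stmt_1 (d r : ℕ) (α : ℕ → ℝ)
    (hnonneg : ∀ i < d, 0 ≤ α i)
    (hmono : ∀ i j, i ≤ j → j < d → α j ≤ α i)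
    (hrd : r < d)
    (hr : (1 / 3 : ℝ) * ∑ i ∈ Finset.range d, (α i) ^ 2 ≤ ∑ i ∈ Finset.range r, (α i) ^ 2)
    (hrmin : ∀ s < r,
      (∑ i ∈ Finset.range s, (α i) ^ 2) < (1 / 3 : ℝ) * ∑ i ∈ Finset.range d, (α i) ^ 2)
    (hr2 : (∑ i ∈ Finset.range r, (α i) ^ 2) ≤ (2 / 3 : ℝ) * ∑ i ∈ Finset.range d, (α i) ^ 2) :
    (1 / 9 : ℝ) * (∑ i ∈ Finset.range d, (α i) ^ 2) ^ 3 / (∑ i ∈ Finset.range d, (α i) ^ 3) ^ 2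
      ≤ (∑ j ∈ Finset.Ico r d, (α j) ^ 2) ^ 2 / (∑ j ∈ Finset.Ico r d, (α j) ^ 4) := by
  have hrd' : r ≤ d := hrd.le
  set S2 := ∑ i ∈ Finset.range d, (α i) ^ 2 with hS2
  set S3 := ∑ i ∈ Finset.range d, (α i) ^ 3 with hS3
  set A := ∑ i ∈ Finset.range r, (α i) ^ 2 with hA
  set B := ∑ j ∈ Finset.Ico r d, (α j) ^ 2 with hB
  set C := ∑ j ∈ Finset.Ico r d, (α j) ^ 4 with hC
  set X := ∑ i ∈ Finset.range r, (α i) ^ 3 with hX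
  set Y := ∑ j ∈ Finset.Ico r d, (α j) ^ 3 with hY
  clear_value S2 S3 A B C X Y
  have hsplit2 : A + B = S2 := by
    rw [hA, hB, hS2]; exact Finset.sum_range_add_sum_Ico _ hrd'
  have hsplit3 : X + Y = S3 := by
    rw [hX, hY, hS3]; exact Finset.sum_range_add_sum_Ico _ hrd'
  have hBnn : 0 ≤ B := by
    rw [hB]; exact Finset.sum_nonneg fun j hj => by positivity
  have hCnn : 0 ≤ C := by
    rw [hC]; exact Finset.sum_nonneg fun j hj => by positivity
  have hS2nn : 0 ≤ S2 := by
    rw [hS2]; exact Finset.sum_nonneg fun j hj => by positivity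
  -- key : A * C ≤ X * Y
  have hkey : A * C ≤ X * Y := by
    rw [hA, hC, hX, hY, Finset.sum_mul_sum, Finset.sum_mul_sum]
    apply Finset.sum_le_sum
    intro i hi
    apply Finset.sum_le_sum
    intro j hj
    rw [Finset.mem_range] at hi
    rw [Finset.mem_Ico] at hj
    have h1 : 0 ≤ α i := hnonneg i (lt_of_lt_of_le hi hrd')
    have h2 : 0 ≤ α j := hnonneg j hj.2
    have h3 : α j ≤ α i := hmono i j (le_trans hi.le hj.1) hj.2
    nlinarith [mul_nonneg (mul_nonneg (sq_nonneg (α i)) (pow_nonneg h2 3)) (sub_nonneg.mpr h3)]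
  have hAC : 4 * (A * C) ≤ S3 ^ 2 := by rw [← hsplit3]; nlinarith [sq_nonneg (X - Y)]
  rcases le_or_gt S2 0 with hS2z | hS2pos
  · have : S2 = 0 := le_antisymm hS2z hS2nn
    rw [this]
    have : (1 / 9 : ℝ) * (0:ℝ) ^ 3 / S3 ^ 2 = 0 := by ring
    rw [this]
    positivity
  · -- S2 > 0
    have hApos : 0 < A := lt_of_lt_of_le (by linarith) hr
    have hBpos : 0 < B := by
      have : A + B = S2 := hsplit2
      linarith
    obtain ⟨j, hj, hjpos⟩ : ∃ j ∈ Finset.Ico r d, 0 < (α j) ^ 2 := by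
      by_contra h
      push_neg at h
      have : B ≤ 0 := by rw [hB]; exact Finset.sum_nonpos fun j hj => h j hj
      linarith
    rw [Finset.mem_Ico] at hj
    have hαj : 0 < α j := by
      rcases lt_or_eq_of_le (hnonneg j hj.2) with h | h
      · exact h
      · exfalso; rw [← h] at hjpos; simp at hjpos
    have hCpos : 0 < C := by
      have : (α j) ^ 4 ≤ C := by
        rw [hC]
        apply Finset.single_le_sum (f := fun j => (α j) ^ 4) (fun k hk => by
          have := hnonneg k (Finset.mem_Ico.mp hk).2; positivity)
        exact Finset.mem_Ico.mpr hj
      nlinarith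
    have hS3pos : 0 < S3 := by
      have : (α j) ^ 3 ≤ S3 := by
        rw [hS3]
        apply Finset.single_le_sum (f := fun k => (α k) ^ 3) (fun k hk => by
          have := hnonneg k (Finset.mem_range.mp hk); positivity)
        exact Finset.mem_range.mpr hj.2
      nlinarith
    rw [div_le_div_iff₀ (by positivity) hCpos]
    -- goal : 1/9 * S2^3 * C ≤ B^2 * S3^2
    have hB3 : S2 / 3 ≤ B := by linarith
    have hA3 : S2 / 3 ≤ A := by linarith
    have h1 : (4 / 3 : ℝ) * (S2 * C) ≤ S3 ^ 2 := by
      nlinarith [mul_le_mul_of_nonneg_right hA3 hCnn]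
    have h2 : (S2 / 3) ^ 2 ≤ B ^ 2 := pow_le_pow_left₀ (by linarith) hB3 2
    have h3 : (S2 / 3) ^ 2 * ((4 / 3 : ℝ) * (S2 * C)) ≤ B ^ 2 * S3 ^ 2 :=
      mul_le_mul h2 h1 (by positivity) (sq_nonneg B)
    nlinarith [h3, mul_nonneg (pow_nonneg hS2nn 3) hCnn]
end

section
/- Let u ∈ (0,1) and g, h ∈ ℝⁿ. Let M(n) be the law of a symmetric n×n random matrix with zero diagonal and i.i.d. N(0,1) entries above the diagonal, and let M(n,u,g) be the law of u·Δ(g) + √(1-u²)·M′ with M′ ∼ M(n), where Δ(g) = gg^T - diag(gg^T). Then E_{A∼M(n)} [ (dM(n,u,g)/dM(n))(A) · (dM(n,u,h)/dM(n))(A) ] = (1-u⁴)^{-n(n-1)/4} · exp( (u²/(1-u⁴)) Σ_{i<j} g_i g_j h_i h_j − (u⁴/(2(1-u⁴))) Σ_{i<j} (g_i²g_j² + h_i²h_j²) ). -/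
open MeasureTheory ProbabilityTheory

/-- The law `M(n)` of a symmetric Gaussian matrix with zero diagonal, encoded by
its strictly-upper-diagonal entries: the product of standard Gaussians over
pairs `i < j`. -/
noncomputable def gaussMatrixLaw (n : ℕ) :
    Measure ({p : Fin n × Fin n // p.1 < p.2} → ℝ) :=
  Measure.pi fun _ => gaussianReal 0 1

/-- The law `M(n,u,g)` of `u Δ(g) + √(1-u²) M'`, `M' ∼ M(n)`, encoded by its
strictly-upper-diagonal entries: entry `(i,j)` is `N(u gᵢ gⱼ, 1 - u²)`. -/
noncomputable def spikedGaussMatrixLaw (n : ℕ) (u : ℝ) (g : Fin n → ℝ) :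
    Measure ({p : Fin n × Fin n // p.1 < p.2} → ℝ) :=
  Measure.pi fun p => gaussianReal (u * g p.1.1 * g p.1.2) ((1 - u ^ 2).toNNReal)

open scoped ENNReal NNReal Real

set_option maxHeartbeats 1000000

theorem my_lintegral_pi_fin {n : ℕ} {E : Fin n → Type*} [∀ i, MeasurableSpace (E i)]
    (μ : ∀ i, Measure (E i)) [∀ i, SigmaFinite (μ i)] (f : ∀ i, E i → ℝ≥0∞)
    (hf : ∀ i, Measurable (f i)) :
    ∫⁻ x, ∏ i, f i (x i) ∂(Measure.pi μ) = ∏ i, ∫⁻ y, f i y ∂(μ i) := by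
  induction n with
  | zero => simp [lintegral_const, Measure.pi_univ]
  | succ n ih =>
      have hmeas : Measurable fun y : E 0 × (∀ j : Fin n, E ((0 : Fin (n+1)).succAbove j)) =>
          f 0 y.1 * ∏ j : Fin n, f ((0 : Fin (n+1)).succAbove j) (y.2 j) :=
        ((hf 0).comp measurable_fst).mul
          (Finset.measurable_prod _ fun j _ =>
            (hf _).comp ((measurable_pi_apply j).comp measurable_snd))
      calc ∫⁻ x, ∏ i, f i (x i) ∂(Measure.pi μ)
          = ∫⁻ y : E 0 × (∀ j : Fin n, E ((0 : Fin (n+1)).succAbove j)),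
              f 0 y.1 * ∏ j : Fin n, f ((0 : Fin (n+1)).succAbove j) (y.2 j)
              ∂((μ 0).prod (Measure.pi fun j => μ ((0 : Fin (n+1)).succAbove j))) := by
            rw [← (measurePreserving_piFinSuccAbove μ 0).lintegral_comp hmeas]
            congr 1 with x
            rw [Fin.prod_univ_succAbove (fun i => f i (x i)) 0]
            simp [MeasurableEquiv.piFinSuccAbove, Fin.tail]
            rfl
        _ = (∫⁻ y, f 0 y ∂(μ 0)) * ∫⁻ z, ∏ j : Fin n, f ((0 : Fin (n+1)).succAbove j) (z j)
              ∂(Measure.pi fun j => μ ((0 : Fin (n+1)).succAbove j)) := by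
            rw [lintegral_prod_mul (f := f 0)
              (g := fun z : ∀ j : Fin n, E ((0 : Fin (n+1)).succAbove j) =>
                ∏ j : Fin n, f ((0 : Fin (n+1)).succAbove j) (z j)) (hf 0).aemeasurable
              (Finset.measurable_prod _ fun j _ =>
                (hf _).comp (measurable_pi_apply j)).aemeasurable]
        _ = ∏ i, ∫⁻ y, f i y ∂(μ i) := by
            rw [ih _ _ fun j => hf _, Fin.prod_univ_succAbove (fun i => ∫⁻ y, f i y ∂(μ i)) 0]

theorem my_lintegral_pi {ι : Type*} [Fintype ι] {E : ι → Type*} [∀ i, MeasurableSpace (E i)]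
    (μ : ∀ i, Measure (E i)) [∀ i, SigmaFinite (μ i)] (f : ∀ i, E i → ℝ≥0∞)
    (hf : ∀ i, Measurable (f i)) :
    ∫⁻ x, ∏ i, f i (x i) ∂(Measure.pi μ) = ∏ i, ∫⁻ y, f i y ∂(μ i) := by
  let e := (Fintype.equivFin ι).symm
  have hmeas : Measurable fun x : ∀ i, E i => ∏ i, f i (x i) :=
    Finset.measurable_prod _ fun i _ => (hf i).comp (measurable_pi_apply i)
  rw [← (measurePreserving_piCongrLeft μ e).lintegral_comp hmeas]
  simp_rw [MeasurableEquiv.coe_piCongrLeft, ← e.prod_comp, Equiv.piCongrLeft_apply_apply]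
  rw [my_lintegral_pi_fin _ _ fun k => hf _]

theorem my_pi_withDensity {ι : Type*} [Fintype ι] {E : ι → Type*} [∀ i, MeasurableSpace (E i)]
    (μ : ∀ i, Measure (E i)) [∀ i, SigmaFinite (μ i)] (f : ∀ i, E i → ℝ≥0∞)
    (hf : ∀ i, Measurable (f i)) [∀ i, SigmaFinite ((μ i).withDensity (f i))] :
    Measure.pi (fun i => (μ i).withDensity (f i))
      = (Measure.pi μ).withDensity (fun x => ∏ i, f i (x i)) := by
  refine Measure.pi_eq fun s hs => ?_
  rw [withDensity_apply _ (MeasurableSet.univ_pi hs)]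
  have key : ∀ x : ∀ i, E i, (Set.pi Set.univ s).indicator (fun x => ∏ i, f i (x i)) x
      = ∏ i, (s i).indicator (f i) (x i) := by
    intro x
    by_cases hx : x ∈ Set.pi Set.univ s
    · rw [Set.indicator_of_mem hx]
      exact Finset.prod_congr rfl fun i _ => (Set.indicator_of_mem (hx i trivial) _).symm
    · rw [Set.indicator_of_notMem hx]
      rw [Set.mem_univ_pi] at hx
      push_neg at hx
      obtain ⟨i, hi⟩ := hx
      exact (Finset.prod_eq_zero (Finset.mem_univ i) (Set.indicator_of_notMem hi _)).symm
  rw [← lintegral_indicator (MeasurableSet.univ_pi hs) _]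
  simp_rw [key]
  rw [my_lintegral_pi μ _ fun i => (hf i).indicator (hs i)]
  exact Finset.prod_congr rfl fun i _ => by
    rw [lintegral_indicator (hs i) _, ← withDensity_apply _ (hs i)]

lemma my_pdf_ratio (u a b : ℝ) (hu0 : 0 < u) (hu1 : u < 1) (x : ℝ) :
    gaussianPDFReal (u*a) (1 - u^2).toNNReal x * gaussianPDFReal (u*b) (1 - u^2).toNNReal x
      / gaussianPDFReal 0 1 x
    = ((1 - u^4) ^ (-(1:ℝ)/2)
        * Real.exp (u^2/(1-u^4) * (a*b) - u^4/(2*(1-u^4)) * (a^2+b^2)))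
      * gaussianPDFReal (u*(a+b)/(1+u^2)) ((1-u^2)/(1+u^2)).toNNReal x := by
  have h1 : (0:ℝ) < 1 - u^2 := by nlinarith
  have h2 : (0:ℝ) < 1 + u^2 := by positivity
  have h4 : (0:ℝ) < 1 - u^4 := by nlinarith
  have hπ : (0:ℝ) < 2 * π := by positivity
  have hrpow : ((1:ℝ) - u^4) ^ (-(1:ℝ)/2) = (Real.sqrt (1-u^4))⁻¹ := by
    rw [Real.sqrt_eq_rpow, ← Real.rpow_neg h4.le, neg_div]
  simp only [gaussianPDFReal, Real.coe_toNNReal _ h1.le,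
    Real.coe_toNNReal _ (by positivity : (0:ℝ) ≤ (1-u^2)/(1+u^2)), NNReal.coe_one, mul_one,
    hrpow, sub_zero]
  set A := Real.sqrt (2*π*(1-u^2)) with hA
  set B := Real.sqrt (2*π) with hB
  set D := Real.sqrt (2*π*((1-u^2)/(1+u^2))) with hD
  set S := Real.sqrt (1-u^4) with hS
  have hApos : 0 < A := Real.sqrt_pos.2 (by positivity)
  have hBpos : 0 < B := Real.sqrt_pos.2 (by positivity)
  have hDpos : 0 < D := Real.sqrt_pos.2 (by positivity)
  have hSpos : 0 < S := Real.sqrt_pos.2 h4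
  have hAA : A * A = 2*π*(1-u^2) := Real.mul_self_sqrt (by positivity)
  have hBB : B * B = 2*π := Real.mul_self_sqrt hπ.le
  have hSD : S * D = B * (1-u^2) := by
    rw [hS, hD, ← Real.sqrt_mul h4.le, hB]
    rw [show (1-u^4) * (2*π*((1-u^2)/(1+u^2))) = (2*π) * (1-u^2)^2 by field_simp; ring]
    rw [Real.sqrt_mul hπ.le, Real.sqrt_sq h1.le]
  have hconst : A⁻¹ * A⁻¹ * B = S⁻¹ * D⁻¹ := by
    field_simp
    nlinarith [hAA, hBB, hSD, hApos, hBpos, hDpos, hSpos, mul_pos hSpos hDpos]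
  have hexp : Real.exp (-(x - u*a)^2 / (2*(1-u^2))) * Real.exp (-(x - u*b)^2 / (2*(1-u^2)))
      / Real.exp (-x^2 / 2)
      = Real.exp (u^2/(1-u^4) * (a*b) - u^4/(2*(1-u^4)) * (a^2+b^2))
        * Real.exp (-(x - u*(a+b)/(1+u^2))^2 / (2*((1-u^2)/(1+u^2)))) := by
    rw [← Real.exp_add, ← Real.exp_sub, ← Real.exp_add]
    congr 1
    have h4' : (1:ℝ) - u^4 = (1-u^2)*(1+u^2) := by ring
    field_simp
    ring
  calc A⁻¹ * Real.exp (-(x - u*a)^2 / (2*(1-u^2))) * (A⁻¹ * Real.exp (-(x - u*b)^2 / (2*(1-u^2))))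
      / (B⁻¹ * Real.exp (-x^2 / 2))
      = (A⁻¹ * A⁻¹ * B) * (Real.exp (-(x - u*a)^2 / (2*(1-u^2)))
          * Real.exp (-(x - u*b)^2 / (2*(1-u^2))) / Real.exp (-x^2 / 2)) := by
        field_simp
    _ = (S⁻¹ * D⁻¹) * (Real.exp (u^2/(1-u^4) * (a*b) - u^4/(2*(1-u^4)) * (a^2+b^2))
          * Real.exp (-(x - u*(a+b)/(1+u^2))^2 / (2*((1-u^2)/(1+u^2))))) := by
        rw [hconst, hexp]
    _ = S⁻¹ * Real.exp (u^2/(1-u^4) * (a*b) - u^4/(2*(1-u^4)) * (a^2+b^2))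
          * (D⁻¹ * Real.exp (-(x - u*(a+b)/(1+u^2))^2 / (2*((1-u^2)/(1+u^2))))) := by ring

lemma my_lintegral_ratio (u a b : ℝ) (hu0 : 0 < u) (hu1 : u < 1) :
    ∫⁻ x, (gaussianPDF (u*a) (1 - u^2).toNNReal x * (gaussianPDF 0 1 x)⁻¹)
        * (gaussianPDF (u*b) (1 - u^2).toNNReal x * (gaussianPDF 0 1 x)⁻¹) ∂(gaussianReal 0 1)
    = ENNReal.ofReal ((1 - u^4) ^ (-(1:ℝ)/2)
        * Real.exp (u^2/(1-u^4) * (a*b) - u^4/(2*(1-u^4)) * (a^2+b^2))) := by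
  have h1 : (0:ℝ) < 1 - u^2 := by nlinarith
  have h2 : (0:ℝ) < 1 + u^2 := by positivity
  have h4 : (0:ℝ) < 1 - u^4 := by nlinarith
  have hv' : ((1-u^2)/(1+u^2)).toNNReal ≠ 0 := by
    rw [ne_eq, Real.toNNReal_eq_zero, not_le]
    positivity
  have hC : 0 ≤ (1 - u^4) ^ (-(1:ℝ)/2)
      * Real.exp (u^2/(1-u^4) * (a*b) - u^4/(2*(1-u^4)) * (a^2+b^2)) :=
    mul_nonneg (Real.rpow_nonneg h4.le _) (Real.exp_pos _).le
  have hm : Measurable fun x =>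
      (gaussianPDF (u*a) (1 - u^2).toNNReal x * (gaussianPDF 0 1 x)⁻¹)
        * (gaussianPDF (u*b) (1 - u^2).toNNReal x * (gaussianPDF 0 1 x)⁻¹) :=
    ((measurable_gaussianPDF _ _).mul (measurable_gaussianPDF 0 1).inv).mul
      ((measurable_gaussianPDF _ _).mul (measurable_gaussianPDF 0 1).inv)
  rw [gaussianReal_of_var_ne_zero 0 one_ne_zero,
    lintegral_withDensity_eq_lintegral_mul _ (measurable_gaussianPDF 0 1) hm]
  have key : ∀ x : ℝ, (gaussianPDF 0 1 * fun x =>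
      (gaussianPDF (u*a) (1 - u^2).toNNReal x * (gaussianPDF 0 1 x)⁻¹)
        * (gaussianPDF (u*b) (1 - u^2).toNNReal x * (gaussianPDF 0 1 x)⁻¹)) x
      = ENNReal.ofReal (((1 - u^4) ^ (-(1:ℝ)/2)
          * Real.exp (u^2/(1-u^4) * (a*b) - u^4/(2*(1-u^4)) * (a^2+b^2)))
          * gaussianPDFReal (u*(a+b)/(1+u^2)) ((1-u^2)/(1+u^2)).toNNReal x) := by
    intro x
    have hc : 0 < gaussianPDFReal 0 1 x := gaussianPDFReal_pos _ _ _ one_ne_zero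
    simp only [Pi.mul_apply, gaussianPDF]
    rw [← ENNReal.ofReal_inv_of_pos hc,
      ← ENNReal.ofReal_mul (gaussianPDFReal_nonneg _ _ x),
      ← ENNReal.ofReal_mul (gaussianPDFReal_nonneg _ _ x),
      ← ENNReal.ofReal_mul (mul_nonneg (gaussianPDFReal_nonneg _ _ x) (inv_nonneg.2 hc.le)),
      ← ENNReal.ofReal_mul (gaussianPDFReal_nonneg _ _ x)]
    congr 1
    rw [← my_pdf_ratio u a b hu0 hu1 x]
    field_simp
  rw [lintegral_congr key]
  simp_rw [ENNReal.ofReal_mul hC]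
  rw [lintegral_const_mul _ (measurable_gaussianPDFReal _ _).ennreal_ofReal,
    lintegral_gaussianPDFReal_eq_one _ hv', mul_one]

def myLtEquiv (n : ℕ) (i : Fin n) : {j : Fin n // j < i} ≃ Fin i where
  toFun j := ⟨j.1.1, j.2⟩
  invFun k := ⟨⟨k.1, k.2.trans i.2⟩, k.2⟩
  left_inv j := Subtype.ext (Fin.ext rfl)
  right_inv k := Fin.ext rfl

lemma my_card_pairs (n : ℕ) :
    Fintype.card {p : Fin n × Fin n // p.1 < p.2} * 2 = n * (n - 1) := by
  have h : Fintype.card {p : Fin n × Fin n // p.1 < p.2} = ∑ i ∈ Finset.range n, i := by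
    rw [Fintype.card_congr (((Equiv.prodComm (Fin n) (Fin n)).subtypeEquiv
        (p := fun p => p.1 < p.2) (q := fun p => p.2 < p.1) (fun p => Iff.rfl)).trans (Equiv.subtypeProdEquivSigmaSubtype
          (fun a b : Fin n => b < a)))]
    rw [Fintype.card_sigma]
    simp_rw [fun i => Fintype.card_congr (myLtEquiv n i), Fintype.card_fin]
    exact Fin.sum_univ_eq_sum_range (fun i => i) n
  rw [h, Finset.sum_range_id_mul_two]

lemma my_gaussian_withDensity (m : ℝ) {v : ℝ≥0} (hv : v ≠ 0) :
    gaussianReal m v = (gaussianReal 0 1).withDensity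
      (fun x => gaussianPDF m v x * (gaussianPDF 0 1 x)⁻¹) := by
  rw [gaussianReal_of_var_ne_zero _ hv, gaussianReal_of_var_ne_zero 0 one_ne_zero,
    ← withDensity_mul _ (g := fun x => gaussianPDF m v x * (gaussianPDF 0 1 x)⁻¹) (measurable_gaussianPDF 0 1)
      ((measurable_gaussianPDF _ _).mul (measurable_gaussianPDF 0 1).inv)]
  congr 1
  ext x
  have hc0 : gaussianPDF 0 1 x ≠ 0 :=
    (ENNReal.ofReal_pos.2 (gaussianPDFReal_pos _ _ _ one_ne_zero)).ne'
  have hct : gaussianPDF 0 1 x ≠ ⊤ := ENNReal.ofReal_ne_top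
  simp only [Pi.mul_apply]
  rw [mul_comm (gaussianPDF m v x), ← mul_assoc, ENNReal.mul_inv_cancel hc0 hct, one_mul]

lemma my_ofReal_prod {ι : Type*} (s : Finset ι) (f : ι → ℝ) (hf : ∀ i ∈ s, 0 ≤ f i) :
    ENNReal.ofReal (∏ i ∈ s, f i) = ∏ i ∈ s, ENNReal.ofReal (f i) := by
  classical
  induction s using Finset.cons_induction with
  | empty => simp
  | cons a s ha ih =>
      rw [Finset.prod_cons, Finset.prod_cons,
        ENNReal.ofReal_mul (hf a (Finset.mem_cons_self a s)),
        ih fun i hi => hf i (Finset.mem_cons_of_mem hi)]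

lemma my_card_pairs_real (n : ℕ) :
    (Fintype.card {p : Fin n × Fin n // p.1 < p.2} : ℝ) * 2 = n * ((n:ℝ) - 1) := by
  cases n with
  | zero =>
      have : Fintype.card {p : Fin 0 × Fin 0 // p.1 < p.2} = 0 := Fintype.card_eq_zero
      simp [this]
  | succ m =>
      have hc := my_card_pairs (m+1)
      rw [Nat.succ_sub_one] at hc
      have : ((Fintype.card {p : Fin (m+1) × Fin (m+1) // p.1 < p.2} : ℕ) : ℝ) * 2
          = ((m+1) * m : ℕ) := by exact_mod_cast congrArg (Nat.cast (R := ℝ)) hc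
      push_cast at this ⊢
      linarith

/-- The Ingster–Suslina inner product of likelihood ratios for rank-one spiked
Gaussian matrices:
`E_{A∼M(n)} (dM(n,u,g)/dM(n))(A) (dM(n,u,h)/dM(n))(A)
  = (1-u⁴)^{-n(n-1)/4} exp((u²/(1-u⁴)) Σ_{i<j} gᵢgⱼhᵢhⱼ
      − (u⁴/(2(1-u⁴))) Σ_{i<j} (gᵢ²gⱼ² + hᵢ²hⱼ²))`. -/
theorem stmt_5 (n : ℕ) (u : ℝ) (hu0 : 0 < u) (hu1 : u < 1) (g h : Fin n → ℝ) :
    (∫ A, ((spikedGaussMatrixLaw n u g).rnDeriv (gaussMatrixLaw n) A).toReal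
        * ((spikedGaussMatrixLaw n u h).rnDeriv (gaussMatrixLaw n) A).toReal
        ∂(gaussMatrixLaw n))
      = (1 - u ^ 4) ^ (-(n * (n - 1) : ℝ) / 4)
        * Real.exp (u ^ 2 / (1 - u ^ 4)
              * ∑ p : {p : Fin n × Fin n // p.1 < p.2},
                  g p.1.1 * g p.1.2 * h p.1.1 * h p.1.2
            - u ^ 4 / (2 * (1 - u ^ 4))
              * ∑ p : {p : Fin n × Fin n // p.1 < p.2},
                  ((g p.1.1) ^ 2 * (g p.1.2) ^ 2 + (h p.1.1) ^ 2 * (h p.1.2) ^ 2)) := by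
  have h1 : (0:ℝ) < 1 - u^2 := by nlinarith
  have h4 : (0:ℝ) < 1 - u^4 := by nlinarith
  have hv : (1 - u^2).toNNReal ≠ 0 := by
    rw [ne_eq, Real.toNNReal_eq_zero, not_le]; exact h1
  let L : (Fin n → ℝ) → {p : Fin n × Fin n // p.1 < p.2} → ℝ → ℝ≥0∞ := fun f p x =>
    gaussianPDF (u * f p.1.1 * f p.1.2) (1 - u^2).toNNReal x * (gaussianPDF 0 1 x)⁻¹
  have hLmeas : ∀ f p, Measurable (L f p) := fun f p =>
    (measurable_gaussianPDF _ _).mul (measurable_gaussianPDF 0 1).inv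
  have hLtop : ∀ f p x, L f p x ≠ ⊤ := fun f p x =>
    ENNReal.mul_ne_top ENNReal.ofReal_ne_top
      (ENNReal.inv_ne_top.2 (ENNReal.ofReal_pos.2 (gaussianPDFReal_pos _ _ _ one_ne_zero)).ne')
  have hspike : ∀ f : Fin n → ℝ, spikedGaussMatrixLaw n u f
      = (gaussMatrixLaw n).withDensity (fun A => ∏ p, L f p (A p)) := by
    intro f
    rw [spikedGaussMatrixLaw, gaussMatrixLaw]
    have hrep : (fun p : {p : Fin n × Fin n // p.1 < p.2} =>
        gaussianReal (u * f p.1.1 * f p.1.2) (1 - u^2).toNNReal)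
        = fun p => (gaussianReal 0 1).withDensity (L f p) :=
      funext fun p => my_gaussian_withDensity _ hv
    haveI : ∀ p : {p : Fin n × Fin n // p.1 < p.2},
        SigmaFinite ((gaussianReal 0 1).withDensity (L f p)) := fun p => by
      rw [← my_gaussian_withDensity _ hv]; infer_instance
    rw [hrep, my_pi_withDensity _ (L f) (hLmeas f)]
  haveI : SigmaFinite (gaussMatrixLaw n) := by rw [gaussMatrixLaw]; infer_instance
  have hFmeas : ∀ f : Fin n → ℝ,
      Measurable (fun A : {p : Fin n × Fin n // p.1 < p.2} → ℝ => ∏ p, L f p (A p)) := fun f =>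
    Finset.measurable_prod _ fun p _ => (hLmeas f p).comp (measurable_pi_apply p)
  rw [hspike g, hspike h]
  have hrng := Measure.rnDeriv_withDensity (gaussMatrixLaw n) (hFmeas g)
  have hrnh := Measure.rnDeriv_withDensity (gaussMatrixLaw n) (hFmeas h)
  have hae : (fun A => (((gaussMatrixLaw n).withDensity
          (fun A => ∏ p, L g p (A p))).rnDeriv (gaussMatrixLaw n) A).toReal
        * (((gaussMatrixLaw n).withDensity
          (fun A => ∏ p, L h p (A p))).rnDeriv (gaussMatrixLaw n) A).toReal)
      =ᵐ[gaussMatrixLaw n]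
        fun A => ((∏ p, L g p (A p)) * (∏ p, L h p (A p))).toReal := by
    filter_upwards [hrng, hrnh] with A e1 e2
    rw [e1, e2, ENNReal.toReal_mul]
  rw [integral_congr_ae hae]
  have hnn : 0 ≤ᵐ[gaussMatrixLaw n]
      fun A => ((∏ p, L g p (A p)) * (∏ p, L h p (A p))).toReal :=
    ae_of_all _ fun A => ENNReal.toReal_nonneg
  rw [integral_eq_lintegral_of_nonneg_ae hnn
    (((hFmeas g).mul (hFmeas h)).ennreal_toReal.aestronglyMeasurable)]
  have hptop : ∀ f (A : {p : Fin n × Fin n // p.1 < p.2} → ℝ), (∏ p, L f p (A p)) ≠ ⊤ :=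
    fun f A => (ENNReal.prod_lt_top fun p _ => (hLtop f p (A p)).lt_top).ne
  have hpe : ∀ A : {p : Fin n × Fin n // p.1 < p.2} → ℝ,
      ENNReal.ofReal (((∏ p, L g p (A p)) * (∏ p, L h p (A p))).toReal)
      = ∏ p, (L g p (A p) * L h p (A p)) := fun A => by
    rw [ENNReal.ofReal_toReal (ENNReal.mul_ne_top (hptop g A) (hptop h A)),
      ← Finset.prod_mul_distrib]
  simp_rw [hpe]
  rw [gaussMatrixLaw, my_lintegral_pi _ (fun p x => L g p x * L h p x) (fun p => (hLmeas g p).mul (hLmeas h p))]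
  have h1d : ∀ p : {p : Fin n × Fin n // p.1 < p.2}, ∫⁻ x, L g p x * L h p x ∂(gaussianReal 0 1)
      = ENNReal.ofReal ((1 - u^4) ^ (-(1:ℝ)/2)
          * Real.exp (u^2/(1-u^4) * ((g p.1.1 * g p.1.2) * (h p.1.1 * h p.1.2))
            - u^4/(2*(1-u^4)) * ((g p.1.1 * g p.1.2)^2 + (h p.1.1 * h p.1.2)^2))) := fun p => by
    have key := my_lintegral_ratio u (g p.1.1 * g p.1.2) (h p.1.1 * h p.1.2) hu0 hu1
    rw [← mul_assoc u (g p.1.1) (g p.1.2), ← mul_assoc u (h p.1.1) (h p.1.2)] at key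
    exact key
  simp_rw [h1d]
  have hCnn : ∀ p : {p : Fin n × Fin n // p.1 < p.2}, (0:ℝ) ≤ (1 - u^4) ^ (-(1:ℝ)/2)
      * Real.exp (u^2/(1-u^4) * ((g p.1.1 * g p.1.2) * (h p.1.1 * h p.1.2))
        - u^4/(2*(1-u^4)) * ((g p.1.1 * g p.1.2)^2 + (h p.1.1 * h p.1.2)^2)) := fun p =>
    mul_nonneg (Real.rpow_nonneg h4.le _) (Real.exp_pos _).le
  rw [← my_ofReal_prod _ _ fun p _ => hCnn p,
    ENNReal.toReal_ofReal (Finset.prod_nonneg fun p _ => hCnn p)]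
  rw [Finset.prod_mul_distrib, Finset.prod_const, ← Real.exp_sum]
  congr 1
  · rw [Finset.card_univ, ← Real.rpow_natCast ((1-u^4) ^ (-(1:ℝ)/2)), ← Real.rpow_mul h4.le]
    congr 1
    have hc := my_card_pairs_real n
    linarith
  · have e1 : ∑ p : {p : Fin n × Fin n // p.1 < p.2},
        g p.1.1 * g p.1.2 * (h p.1.1 * h p.1.2)
        = ∑ p : {p : Fin n × Fin n // p.1 < p.2}, g p.1.1 * g p.1.2 * h p.1.1 * h p.1.2 :=
      Finset.sum_congr rfl fun p _ => by ring
    have e2 : ∑ p : {p : Fin n × Fin n // p.1 < p.2},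
        ((g p.1.1 * g p.1.2) ^ 2 + (h p.1.1 * h p.1.2) ^ 2)
        = ∑ p : {p : Fin n × Fin n // p.1 < p.2},
          ((g p.1.1) ^ 2 * (g p.1.2) ^ 2 + (h p.1.1) ^ 2 * (h p.1.2) ^ 2) :=
      Finset.sum_congr rfl fun p _ => by ring
    rw [Finset.sum_sub_distrib, ← Finset.mul_sum, ← Finset.mul_sum, e1, e2]
end
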